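/- Let K ⊆ L be a Galois extension of finite fields, σ a fixed element of Gal(L/K), and y ∈ L a generator of L as a K-algebra. If B : L × L → K is a symmetric K-bilinear form satisfying B(ya, yb) = B(a,b) for all a,b ∈ L and y·σ(y) = 1, then there exists a unique c ∈ L such that B(a,b) = Tr_{L/K}(c·σ(a)·b) for all a,b ∈ L. -/

import Mathlib

theorem exists_unique_hermitian_repr {K L : Type*} [Field K] [Field L]
    [Fintype K] [Fintype L] [Algebra K L] [IsGalois K L]
    (sigma : L ≃ₐ[K] L) (y : L)
    (hy : Algebra.adjoin K {y} = ⊤)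
    (hysigma : y * sigma y = 1)
    (B : L →ₗ[K] L →ₗ[K] K)
    (hsymm : ∀ a b : L, B a b = B b a)
    (hinv : ∀ a b : L, B (y * a) (y * b) = B a b) :
    ∃! c : L, ∀ a b : L, B a b = Algebra.trace K L (c * sigma a * b) := by
  have hfd : FiniteDimensional K L := Module.Finite.of_finite
  have hnd := traceForm_nondegenerate K L
  set T := (Algebra.traceForm K L).toDual hnd with hT
  set f : L →ₗ[K] L := T.symm.toLinearMap ∘ₗ B with hf
  have hfB : ∀ a b : L, Algebra.trace K L (f a * b) = B a b := fun a b =>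
    LinearMap.BilinForm.apply_toDual_symm_apply (hB := hnd) (B a) b
  have hy0 : y ≠ 0 := by
    intro h; rw [h, zero_mul] at hysigma; exact zero_ne_one hysigma
  have hsy : sigma y = y⁻¹ := eq_inv_of_mul_eq_one_left (by rwa [mul_comm])
  -- key invariance for f
  have hkey : ∀ a : L, f (y * a) * y = f a := by
    intro a
    rw [← sub_eq_zero]
    apply hnd.1
    intro b
    have h1 : Algebra.trace K L (f (y * a) * (y * b)) = B a b := by
      rw [hfB, hinv]
    have h2 : Algebra.trace K L (f a * b) = B a b := hfB a b
    simp only [map_sub, LinearMap.sub_apply, Algebra.traceForm_apply]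
    rw [mul_assoc, h1, h2, sub_self]
  have hpow : ∀ n : ℕ, f (y ^ n) = f 1 * sigma (y ^ n) := by
    intro n
    induction n with
    | zero => simp
    | succ n ih =>
      have h := hkey (y ^ n)
      rw [ih] at h
      have hne : f (y * y ^ n) = f 1 * sigma (y ^ n) * y⁻¹ := by
        rw [← h]; field_simp
      calc f (y ^ (n + 1)) = f (y * y ^ n) := congrArg f (by ring)
        _ = f 1 * sigma (y ^ n) * y⁻¹ := hne
        _ = f 1 * (sigma (y ^ n) * sigma y) := by rw [hsy]; ring
        _ = f 1 * sigma (y ^ (n + 1)) := by rw [← map_mul, ← pow_succ]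
  set c := f 1 with hc
  have hfa : ∀ a : L, f a = c * sigma a := by
    have hspan : Submodule.span K ((Submonoid.closure ({y} : Set L) : Submonoid L) : Set L)
        = ⊤ := by
      have h1 := Algebra.adjoin_eq_span (R := K) (s := ({y} : Set L))
      rw [hy, Algebra.top_toSubmodule] at h1
      exact h1.symm
    have := LinearMap.ext_on hspan (f := f)
      (g := (LinearMap.mulLeft K c).comp sigma.toLinearMap) ?_
    · intro a; exact congrFun (congrArg _ this) a
    · intro x hx
      obtain ⟨n, rfl⟩ := Submonoid.mem_closure_singleton.mp hx
      simpa using hpow n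
  refine ⟨c, fun a b => by rw [← hfB a b, hfa a], ?_⟩
  intro c' hc'
  have : ∀ b : L, Algebra.traceForm K L (c' - c) b = 0 := by
    intro b
    have h1 := hc' 1 b
    have h2 : B 1 b = Algebra.trace K L (c * sigma 1 * b) := by
      rw [← hfB 1 b, hfa 1]
    simp only [map_one, mul_one] at h1 h2
    simp [Algebra.traceForm_apply, sub_mul, h1.symm.trans h2]
  have := hnd.1 _ this
  exact sub_eq_zero.mp this
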